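/- Let T be a tree, D a distribution on T, ω a nonnegative weight function, and C = D − ω the induced generalized distribution. Let v be a leaf of T with neighbor u, and define a generalized distribution C' on T \ v by: C'(u) = C(u) + ⌊C(v)/2⌋ if C(v) ≥ 0, and C'(u) = C(u) + 2C(v) if C(v) < 0, with C'(x) = C(x) for all other x. Then C is 0-solvable in T if and only if C' is 0-solvable in T \ v. -/

import Mathlib

open SimpleGraph Finset

variable {V : Type*} [DecidableEq V]

/-- A valid sequence of pebbling moves: `ValidSeq G D S D'` means executing the
moves of `S` in order (each move `(u,v)` removes two pebbles from `u`, which must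
hold at least two, and adds one on the adjacent vertex `v`) transforms `D` into `D'`. -/
inductive ValidSeq (G : SimpleGraph V) : (V → ℕ) → List (V × V) → (V → ℕ) → Prop
  | nil (D : V → ℕ) : ValidSeq G D [] D
  | cons (D : V → ℕ) (u v : V) (huv : G.Adj u v) (h2 : 2 ≤ D u) {S : List (V × V)}
      {D' : V → ℕ}
      (h : ValidSeq G (fun x => if x = u then D u - 2 else if x = v then D v + 1 else D x)
        S D') :
      ValidSeq G D ((u, v) :: S) D'

/-- A generalized pebbling move among vertices of `A`, on integer-valued distributions. -/
def ZStepOn (G : SimpleGraph V) (A : Set V) (C C' : V → ℤ) : Prop :=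
  ∃ u v, u ∈ A ∧ v ∈ A ∧ G.Adj u v ∧ 2 ≤ C u ∧
    C' = fun x => if x = u then C u - 2 else if x = v then C v + 1 else C x

/-- A generalized distribution is `0`-solvable within `A` if pebbling moves inside `A`
reach a distribution nonnegative on `A`. -/
def ZSolvableOn (G : SimpleGraph V) (A : Set V) (C : V → ℤ) : Prop :=
  ∃ C', Relation.ReflTransGen (ZStepOn G A) C C' ∧ ∀ x ∈ A, 0 ≤ C' x

/-- Iterated leaf contraction: `Contract G s C s' C'` means the generalized
distribution `C` on the vertex set `s` can be contracted to `C'` on `s'` by repeatedly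
deleting a leaf `x` (a vertex with a unique neighbor `y` in the current set), replacing
`C y` by `C y + ⌊C x / 2⌋` if `C x ≥ 0` and by `C y + 2 C x` if `C x < 0`. -/
inductive Contract (G : SimpleGraph V) : Finset V → (V → ℤ) → Finset V → (V → ℤ) → Prop
  | refl (s : Finset V) (C : V → ℤ) : Contract G s C s C
  | step {s : Finset V} {C : V → ℤ} (x y : V) (hx : x ∈ s) (hy : y ∈ s)
      (hadj : G.Adj x y) (hleaf : ∀ z ∈ s, G.Adj x z → z = y)
      {s' : Finset V} {C' : V → ℤ}
      (h : Contract G (s.erase x)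
        (fun w => if w = y then C y + (if 0 ≤ C x then C x / 2 else 2 * C x) else C w)
        s' C') :
      Contract G s C s' C'


section AuxMachinery

variable [Fintype V]

def flowOut (f : V → V → ℕ) (x : V) : ℤ := ∑ y, (f x y : ℤ)
def flowIn (f : V → V → ℕ) (x : V) : ℤ := ∑ y, (f y x : ℤ)
def bal (C : V → ℤ) (f : V → V → ℕ) (x : V) : ℤ := C x - 2 * flowOut f x + flowIn f x

lemma bal_addEdge (C : V → ℤ) (f : V → V → ℕ) {u v : V} (huv : u ≠ v) (x : V) :
    bal C (fun a b => f a b + if a = u ∧ b = v then 1 else 0) x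
      = bal (fun x => if x = u then C u - 2 else if x = v then C v + 1 else C x) f x := by
  unfold bal flowOut flowIn
  push_cast
  rw [Finset.sum_add_distrib, Finset.sum_add_distrib]
  have h1 : ∑ y, (if x = u ∧ y = v then (1:ℤ) else 0) = if x = u then 1 else 0 := by
    by_cases hx : x = u <;> simp [hx]
  have h2 : ∑ y, (if y = u ∧ x = v then (1:ℤ) else 0) = if x = v then 1 else 0 := by
    by_cases hx : x = v <;> simp [hx]
  rw [h1, h2]
  by_cases hx : x = u
  · subst hx; rw [if_pos rfl, if_pos rfl, if_neg huv]; ring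
  · by_cases hx2 : x = v
    · subst hx2; simp [hx]; ring
    · simp only [if_neg hx, if_neg hx2]; ring

lemma extract_flow {G : SimpleGraph V} {A : Set V} {C C'' : V → ℤ}
    (h : Relation.ReflTransGen (ZStepOn G A) C C'') :
    ∃ f : V → V → ℕ, (∀ w z, f w z ≠ 0 → w ∈ A ∧ z ∈ A ∧ G.Adj w z) ∧
      ∀ x, C'' x = bal C f x := by
  induction h using Relation.ReflTransGen.head_induction_on with
  | refl => exact ⟨fun _ _ => 0, by simp, fun x => by simp [bal, flowOut, flowIn]⟩
  | head hstep htail ih =>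
    obtain ⟨u, v, hu, hv, hadj, h2, hC⟩ := hstep
    obtain ⟨f₁, hsupp, hbal⟩ := ih
    refine ⟨fun a b => f₁ a b + if a = u ∧ b = v then 1 else 0, ?_, ?_⟩
    · intro w z hwz
      by_cases hcase : w = u ∧ z = v
      · exact ⟨hcase.1 ▸ hu, hcase.2 ▸ hv, hcase.1 ▸ hcase.2 ▸ hadj⟩
      · apply hsupp
        simpa [hcase] using hwz
    · intro x
      rw [bal_addEdge _ _ hadj.ne, ← hC]
      exact hbal x

lemma exists_source {G : SimpleGraph V} (hG : G.IsAcyclic) (f : V → V → ℕ)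
    (hadj : ∀ w z, f w z ≠ 0 → G.Adj w z) (hone : ∀ w z, f w z = 0 ∨ f z w = 0)
    (hne : ∃ w z, f w z ≠ 0) : ∃ w, (∃ z, f w z ≠ 0) ∧ ∀ y, f y w = 0 := by
  by_contra hcon
  push_neg at hcon
  have hstep : ∀ w : V, (∃ z, f w z ≠ 0) → ∃ y, f y w ≠ 0 ∧ (∃ z, f y z ≠ 0) := by
    intro w hw
    obtain ⟨y, hy⟩ := hcon w hw
    exact ⟨y, hy, ⟨w, hy⟩⟩
  choose nxt hnxt1 hnxt2 using hstep
  obtain ⟨w₀, z₀, h₀⟩ := hne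
  let φ : ℕ → {w : V // ∃ z, f w z ≠ 0} := fun n =>
    Nat.rec ⟨w₀, ⟨z₀, h₀⟩⟩ (fun _ p => ⟨nxt p.1 p.2, hnxt2 p.1 p.2⟩) n
  set ψ : ℕ → V := fun n => (φ n).1 with hψdef
  have hchain : ∀ n, f (ψ (n+1)) (ψ n) ≠ 0 := fun n => hnxt1 (φ n).1 (φ n).2
  have hAdj : ∀ n, G.Adj (ψ (n+1)) (ψ n) := fun n => hadj _ _ (hchain n)
  -- pigeonhole
  obtain ⟨x, y, hxy, hexy⟩ := Finite.exists_ne_map_eq_of_infinite ψ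
  have hPex : ∃ j, ∃ i, i < j ∧ ψ i = ψ j := by
    rcases lt_or_gt_of_ne hxy with h | h
    · exact ⟨y, x, h, hexy⟩
    · exact ⟨x, y, h, hexy.symm⟩
  classical
  let j₀ := Nat.find hPex
  obtain ⟨i, hij, hψij⟩ : ∃ i, i < j₀ ∧ ψ i = ψ j₀ := Nat.find_spec hPex
  have hmin : ∀ j' < j₀, ¬ ∃ i, i < j' ∧ ψ i = ψ j' := fun j' h => Nat.find_min hPex h
  have inj : ∀ a b, a < b → b < j₀ → ψ a ≠ ψ b := by
    intro a b hab hb h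
    exact hmin b hb ⟨a, hab, h⟩
  -- case analysis on j₀ - i
  have h1 : j₀ ≠ i + 1 := by
    intro h
    have := (hAdj i).ne
    rw [← h, ← hψij] at this
    exact this rfl
  have h2 : j₀ ≠ i + 2 := by
    intro h
    have hc1 : f (ψ (i+1)) (ψ i) ≠ 0 := hchain i
    have hc2 : f (ψ (i+2)) (ψ (i+1)) ≠ 0 := hchain (i+1)
    rw [← h, ← hψij] at hc2
    rcases hone (ψ (i+1)) (ψ i) with h' | h'
    · exact hc1 h'
    · exact hc2 h'
  have h3 : i + 3 ≤ j₀ := by omega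
  -- build the long walk
  have walkex : ∀ a k : ℕ, ∃ p : G.Walk (ψ (a + k)) (ψ a),
      p.length = k ∧ p.support = ((List.range (k+1)).reverse).map (fun t => ψ (a + t)) := by
    intro a k
    induction k with
    | zero => exact ⟨.nil, rfl, by rw [List.range_succ]; simp⟩
    | succ k ihk =>
      obtain ⟨p, hl, hs⟩ := ihk
      refine ⟨.cons (hAdj (a+k)) p, by simp [hl], ?_⟩
      have hrev : (List.range (k+1+1)).reverse = (k+1) :: (List.range (k+1)).reverse := by
        rw [List.range_succ]; simp
      rw [SimpleGraph.Walk.support_cons, hs, hrev, List.map_cons]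
  set k := j₀ - (i+1) with hk
  have hik : i + 1 + k = j₀ := by omega
  obtain ⟨p, hlen, hsupp⟩ := walkex (i+1) k
  have hcast : ψ (i + 1 + k) = ψ i := by rw [hik, ← hψij]
  let q : G.Walk (ψ i) (ψ (i+1)) := p.copy hcast rfl
  have hinj2 : ∀ s t, s ≤ k → t ≤ k → ψ (i+1+s) = ψ (i+1+t) → s = t := by
    intro s t hs ht hst
    by_contra hne'
    -- wlog s < t
    have key : ∀ s t, s < t → t ≤ k → ψ (i+1+s) ≠ ψ (i+1+t) := by
      intro s t hstlt htk he
      rcases Nat.lt_or_ge (i+1+t) j₀ with hlt | hge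
      · exact inj (i+1+s) (i+1+t) (by omega) hlt he
      · have : i+1+t = j₀ := by omega
        rw [this, ← hψij] at he
        exact inj i (i+1+s) (by omega) (by omega) he.symm
    rcases Nat.lt_or_ge s t with h' | h'
    · exact key s t h' ht hst
    · exact key t s (by omega) hs hst.symm
  have hqpath : q.IsPath := by
    rw [SimpleGraph.Walk.isPath_def, SimpleGraph.Walk.support_copy, hsupp]
    apply List.Nodup.map_on
    · intro s hs t ht hst
      have hs' : s ≤ k := by
        have := List.mem_reverse.mp hs; have := List.mem_range.mp this; omega
      have ht' : t ≤ k := by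
        have := List.mem_reverse.mp ht; have := List.mem_range.mp this; omega
      exact hinj2 s t hs' ht' hst
    · exact List.nodup_reverse.mpr List.nodup_range
  let r : G.Walk (ψ i) (ψ (i+1)) := SimpleGraph.Walk.cons (hAdj i).symm .nil
  have hrpath : r.IsPath := by
    rw [SimpleGraph.Walk.isPath_def]
    simp [r]
    exact inj i (i+1) (by omega) (by omega)
  have := SimpleGraph.isAcyclic_iff_path_unique.mp hG ⟨q, hqpath⟩ ⟨r, hrpath⟩
  have hlq : q.length = r.length := congrArg (fun (p : G.Path _ _) => p.1.length) this
  rw [SimpleGraph.Walk.length_copy, hlen] at hlq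
  simp [r] at hlq
  omega

lemma cancel_flow (f : V → V → ℕ) :
    ∃ g : V → V → ℕ, (∀ w z, g w z ≤ f w z) ∧ (∀ w z, g w z = 0 ∨ g z w = 0) ∧
      ∀ (C : V → ℤ) (x : V), bal C f x ≤ bal C g x := by
  refine ⟨fun w z => f w z - min (f w z) (f z w), fun w z => Nat.sub_le _ _, ?_, ?_⟩
  · intro w z
    rcases le_total (f w z) (f z w) with h | h
    · left; simp [min_eq_left h]
    · right; simp [min_eq_left h]
  · intro C x
    unfold bal flowOut flowIn
    have hc : ∀ a b : V, ((f a b - min (f a b) (f b a) : ℕ) : ℤ)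
        = (f a b : ℤ) - min (f a b) (f b a) := by
      intro a b
      have : min (f a b) (f b a) ≤ f a b := min_le_left _ _
      push_cast [this]
      ring
    simp only [hc]
    rw [Finset.sum_sub_distrib, Finset.sum_sub_distrib]
    have hmm : ∑ y, ((min (f y x) (f x y) : ℕ) : ℤ) = ∑ y, ((min (f x y) (f y x) : ℕ) : ℤ) := by
      apply Finset.sum_congr rfl
      intro y _
      rw [min_comm]
    rw [hmm]
    have hpos : (0:ℤ) ≤ ∑ y, ((min (f x y) (f y x) : ℕ) : ℤ) :=
      Finset.sum_nonneg fun y _ => by positivity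
    linarith

lemma order_flow {G : SimpleGraph V} (hG : G.IsAcyclic) (A : Set V) :
    ∀ (N : ℕ) (C : V → ℤ) (f : V → V → ℕ),
      (∑ w, ∑ z, f w z) = N →
      (∀ w z, f w z ≠ 0 → w ∈ A ∧ z ∈ A ∧ G.Adj w z) →
      (∀ w z, f w z = 0 ∨ f z w = 0) →
      (∀ x ∈ A, 0 ≤ bal C f x) →
      ZSolvableOn G A C := by
  intro N
  induction N using Nat.strong_induction_on with
  | _ N ih =>
    intro C f hN hsupp hone hbal
    by_cases hzero : ∀ w z, f w z = 0
    · refine ⟨C, .refl, fun x hx => ?_⟩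
      have := hbal x hx
      simpa [bal, flowOut, flowIn, hzero] using this
    · push_neg at hzero
      obtain ⟨w, hwout, hwin⟩ := exists_source hG f (fun a b h => (hsupp a b h).2.2) hone hzero
      obtain ⟨z, hz⟩ := hwout
      obtain ⟨hwA, hzA, hadjwz⟩ := hsupp w z hz
      set C₁ : V → ℤ := fun x => if x = w then C w - 2 else if x = z then C z + 1 else C x
        with hC₁
      set f₁ : V → V → ℕ := fun a b => f a b - (if a = w ∧ b = z then 1 else 0) with hf₁
      have hfe : f = fun a b => f₁ a b + (if a = w ∧ b = z then 1 else 0) := by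
        funext a b
        simp only [hf₁]
        by_cases h : a = w ∧ b = z
        · rw [if_pos h]
          have h1 : 1 ≤ f a b := by
            obtain ⟨rfl, rfl⟩ := h
            exact Nat.one_le_iff_ne_zero.mpr hz
          omega
        · rw [if_neg h]
          omega
      have hb : ∀ x, bal C f x = bal C₁ f₁ x := by
        intro x
        conv_lhs => rw [hfe]
        rw [bal_addEdge _ _ hadjwz.ne]
      have hin : flowIn f w = 0 := by
        unfold flowIn; simp [hwin]
      have hout1 : (1:ℤ) ≤ flowOut f w := by
        unfold flowOut
        calc (1:ℤ) ≤ (f w z : ℤ) := by exact_mod_cast Nat.one_le_iff_ne_zero.mpr hz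
        _ ≤ ∑ y, (f w y : ℤ) :=
          Finset.single_le_sum (f := fun y => (f w y : ℤ)) (fun y _ => by positivity)
            (Finset.mem_univ z)
      have h2 : 2 ≤ C w := by
        have := hbal w hwA
        unfold bal at this
        rw [hin] at this
        linarith
      have hmeas : (∑ a, ∑ b, f₁ a b) < N := by
        have hite : ∀ a : V, (∑ b, if a = w ∧ b = z then (1:ℕ) else 0) = if a = w then 1 else 0 := by
          intro a; by_cases h : a = w <;> simp [h]
        have : (∑ a, ∑ b, f a b) = (∑ a, ∑ b, f₁ a b) + 1 := by
          conv_lhs => rw [hfe]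
          simp only [Finset.sum_add_distrib, hite]
          simp
        omega
      have hsupp₁ : ∀ a b, f₁ a b ≠ 0 → a ∈ A ∧ b ∈ A ∧ G.Adj a b := by
        intro a b h
        apply hsupp
        intro h0
        apply h
        simp [hf₁, h0]
      have hone₁ : ∀ a b, f₁ a b = 0 ∨ f₁ b a = 0 := by
        intro a b
        rcases hone a b with h | h
        · left; simp [hf₁, h]
        · right; simp [hf₁, h]
      have hbal₁ : ∀ x ∈ A, 0 ≤ bal C₁ f₁ x := fun x hx => (hb x) ▸ hbal x hx
      obtain ⟨E, hrun, hE⟩ := ih _ hmeas C₁ f₁ rfl hsupp₁ hone₁ hbal₁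
      exact ⟨E, .head ⟨w, z, hwA, hzA, hadjwz, h2, hC₁⟩ hrun, hE⟩


lemma bal_addMulti (C : V → ℤ) (f : V → V → ℕ) {u v : V} (huv : u ≠ v) (k : ℕ) (x : V) :
    bal C (fun a b => f a b + if a = u ∧ b = v then k else 0) x
      = bal C f x + (if x = u then -(2*(k:ℤ)) else 0) + (if x = v then (k:ℤ) else 0) := by
  unfold bal flowOut flowIn
  push_cast
  rw [Finset.sum_add_distrib, Finset.sum_add_distrib]
  have h1 : ∑ y, (if x = u ∧ y = v then (k:ℤ) else 0) = if x = u then (k:ℤ) else 0 := by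
    by_cases hx : x = u <;> simp [hx]
  have h2 : ∑ y, (if y = u ∧ x = v then (k:ℤ) else 0) = if x = v then (k:ℤ) else 0 := by
    by_cases hx : x = v <;> simp [hx]
  rw [h1, h2]
  by_cases hx : x = u
  · subst hx
    simp only [if_pos rfl, if_neg huv, if_true, if_false]
    simp
    ring
  · by_cases hx2 : x = v
    · subst hx2
      simp only [if_neg hx, if_pos rfl, if_true, if_false]
      simp [hx]
      ring
    · simp only [if_neg hx, if_neg hx2]
      ring


theorem main_aux [Fintype V] (T : SimpleGraph V) (hT : T.IsAcyclic) (C : V → ℤ) (v u : V)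
    (hvu : ∀ z, T.Adj v z → z = u) (hadj : T.Adj v u) :
    ZSolvableOn T Set.univ C ↔
      ZSolvableOn T {x | x ≠ v}
        (fun x => if x = u then C u + (if 0 ≤ C v then C v / 2 else 2 * C v) else C x) := by
  classical
  have huv : u ≠ v := Ne.symm hadj.ne
  set g : ℤ := if 0 ≤ C v then C v / 2 else 2 * C v with hgdef
  set C₂ : V → ℤ := fun x => if x = u then C u + g else C x with hC₂
  have hbalCC₂ : ∀ (fh : V → V → ℕ) (x : V),
      bal C₂ fh x = bal C fh x + (if x = u then g else 0) := by
    intro fh x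
    unfold bal
    simp only [hC₂]
    by_cases hx : x = u
    · rw [if_pos hx, if_pos hx, hx]
      ring
    · rw [if_neg hx, if_neg hx]
      ring
  constructor
  · rintro ⟨E, hrun, hE⟩
    obtain ⟨f, hsupp, hbal⟩ := extract_flow hrun
    obtain ⟨fh, hle, hone, hmono⟩ := cancel_flow f
    have hbal0 : ∀ x, 0 ≤ bal C fh x := by
      intro x
      have h1 := hmono C x
      have h2 := hE x (Set.mem_univ x)
      rw [hbal x] at h2
      linarith
    have hadjf : ∀ w z, fh w z ≠ 0 → T.Adj w z := by
      intro w z h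
      have hf : f w z ≠ 0 := by
        intro h0
        apply h
        have := hle w z
        omega
      exact (hsupp w z hf).2.2
    have hvy : ∀ y, y ≠ u → fh v y = 0 := by
      intro y hy
      by_contra h
      exact hy (hvu y (hadjf v y h))
    have hyv : ∀ y, y ≠ u → fh y v = 0 := by
      intro y hy
      by_contra h
      exact hy (hvu y ((hadjf y v h).symm))
    set av := fh v u with hav
    set bv := fh u v with hbv
    set f' : V → V → ℕ := fun a b => if a = v ∨ b = v then 0 else fh a b with hf'
    have hsplit : fh = fun a b =>
        ((fun a b => f' a b + if a = v ∧ b = u then av else 0) a b)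
          + (if a = u ∧ b = v then bv else 0) := by
      funext a b
      simp only [hf']
      by_cases h1 : a = v ∨ b = v
      · rw [if_pos h1]
        by_cases h2 : a = v ∧ b = u
        · have h3 : ¬(a = u ∧ b = v) := by
            rintro ⟨hau, _⟩
            exact huv (hau.symm.trans h2.1)
          rw [if_pos h2, if_neg h3, h2.1, h2.2, hav]
          omega
        · by_cases h3 : a = u ∧ b = v
          · rw [if_neg h2, if_pos h3, h3.1, h3.2, hbv]
            omega
          · rw [if_neg h2, if_neg h3]
            rcases h1 with h | h
            · have hbu : b ≠ u := fun hb => h2 ⟨h, hb⟩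
              rw [h, hvy b hbu]
            · have hau : a ≠ u := fun ha' => h3 ⟨ha', h⟩
              rw [h, hyv a hau]
      · rw [if_neg h1, if_neg (fun h2 : a = v ∧ b = u => h1 (Or.inl h2.1)),
            if_neg (fun h3 : a = u ∧ b = v => h1 (Or.inr h3.2))]
        omega
    have hbal' : ∀ x, bal C fh x = bal C f' x
        + (if x = v then -(2*(av:ℤ)) else 0) + (if x = u then (av:ℤ) else 0)
        + (if x = u then -(2*(bv:ℤ)) else 0) + (if x = v then (bv:ℤ) else 0) := by
      intro x
      conv_lhs => rw [hsplit]
      rw [bal_addMulti _ _ huv bv x, bal_addMulti _ _ (Ne.symm huv) av x]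
    have hf'v : bal C f' v = C v := by
      unfold bal flowOut flowIn
      simp [hf']
    have hbalv : (0:ℤ) ≤ C v - 2*(av:ℤ) + bv := by
      have h0 := hbal0 v
      rw [hbal' v, hf'v] at h0
      simp only [eq_self_iff_true, if_true, if_neg (Ne.symm huv)] at h0
      linarith
    have honeuv : bv = 0 ∨ av = 0 := hone u v
    have harith : 0 ≤ g + 2*(bv:ℤ) - av := by
      rw [hgdef]
      by_cases hcv : 0 ≤ C v
      · rw [if_pos hcv]
        rcases honeuv with h | h
        · rw [h] at hbalv ⊢
          push_cast at hbalv ⊢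
          have h2a : (av:ℤ) ≤ C v / 2 := by
            rw [Int.le_ediv_iff_mul_le (by norm_num)]
            linarith
          linarith
        · rw [h]
          have hg0 : 0 ≤ C v / 2 := Int.ediv_nonneg hcv (by norm_num)
          have hbv0 : (0:ℤ) ≤ (bv:ℤ) := by positivity
          push_cast
          linarith
      · rw [if_neg hcv]
        have hav0 : (0:ℤ) ≤ (av:ℤ) := by positivity
        have hbv0 : (0:ℤ) ≤ (bv:ℤ) := by positivity
        linarith
    apply order_flow hT {x | x ≠ v} (∑ w, ∑ z, f' w z) C₂ f' rfl
    · intro w z h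
      simp only [hf'] at h
      by_cases hc : w = v ∨ z = v
      · rw [if_pos hc] at h
        exact absurd rfl h
      · rw [if_neg hc] at h
        push_neg at hc
        exact ⟨hc.1, hc.2, hadjf w z h⟩
    · intro a b
      rcases hone a b with h | h
      · left
        simp only [hf']
        rw [h]
        simp
      · right
        simp only [hf']
        rw [h]
        simp
    · intro x hx
      have hxv : x ≠ v := hx
      rw [hbalCC₂ f' x]
      have h0 := hbal0 x
      rw [hbal' x, if_neg hxv, if_neg hxv] at h0
      by_cases hxu : x = u
      · rw [if_pos hxu]
        rw [if_pos hxu, if_pos hxu] at h0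
        linarith
      · rw [if_neg hxu]
        rw [if_neg hxu, if_neg hxu] at h0
        linarith
  · rintro ⟨E, hrun, hE⟩
    obtain ⟨f, hsupp, hbal⟩ := extract_flow hrun
    obtain ⟨fh, hle, hone, hmono⟩ := cancel_flow f
    have hbal0 : ∀ x, x ≠ v → 0 ≤ bal C₂ fh x := by
      intro x hx
      have h1 := hmono C₂ x
      have h2 := hE x hx
      rw [hbal x] at h2
      linarith
    have hnov1 : ∀ y, fh v y = 0 := by
      intro y
      have hf0 : f v y = 0 := by
        by_contra h
        exact (hsupp v y h).1 rfl
      have := hle v y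
      omega
    have hnov2 : ∀ y, fh y v = 0 := by
      intro y
      have hf0 : f y v = 0 := by
        by_contra h
        exact (hsupp y v h).2.1 rfl
      have := hle y v
      omega
    have hadjf : ∀ w z, fh w z ≠ 0 → T.Adj w z := by
      intro w z h
      have hf : f w z ≠ 0 := by
        intro h0
        apply h
        have := hle w z
        omega
      exact (hsupp w z hf).2.2
    have hflowv1 : flowOut fh v = 0 := by
      unfold flowOut
      simp [hnov1]
    have hflowv2 : flowIn fh v = 0 := by
      unfold flowIn
      simp [hnov2]
    by_cases hcv : 0 ≤ C v
    · set k : ℕ := (C v / 2).toNat with hk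
      have hkz : (k:ℤ) = C v / 2 := Int.toNat_of_nonneg (Int.ediv_nonneg hcv (by norm_num))
      set F : V → V → ℕ := fun a b => fh a b + if a = v ∧ b = u then k else 0 with hF
      have hbF : ∀ x, bal C F x = bal C fh x
          + (if x = v then -(2*(k:ℤ)) else 0) + (if x = u then (k:ℤ) else 0) :=
        fun x => bal_addMulti C fh (Ne.symm huv) k x
      apply order_flow hT Set.univ (∑ w, ∑ z, F w z) C F rfl
      · intro w z h
        refine ⟨Set.mem_univ w, Set.mem_univ z, ?_⟩
        by_cases hc : w = v ∧ z = u
        · rw [hc.1, hc.2]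
          exact hadj
        · apply hadjf
          intro h0
          apply h
          simp only [hF]
          rw [h0, if_neg hc]
      · intro a b
        by_cases ha : a = v
        · right
          simp only [hF]
          rw [ha, hnov2 b, if_neg (fun h : b = v ∧ v = u => huv h.2.symm)]
        · by_cases hb : b = v
          · left
            simp only [hF]
            rw [hb, hnov2 a, if_neg (fun h : a = v ∧ v = u => ha h.1)]
          · rcases hone a b with h | h
            · left
              simp only [hF]
              rw [h, if_neg (fun hq : a = v ∧ b = u => ha hq.1)]
            · right
              simp only [hF]
              rw [h, if_neg (fun hq : b = v ∧ a = u => hb hq.1)]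
      · intro x _
        rw [hbF x]
        by_cases hxv : x = v
        · rw [if_pos hxv, if_neg (fun h : x = u => huv (h.symm.trans hxv))]
          have h1 : bal C fh x = C v := by
            unfold bal
            rw [hxv, hflowv1, hflowv2]
            ring
          rw [h1, hkz]
          have hmod := Int.mul_ediv_add_emod (C v) 2
          have hmn := Int.emod_nonneg (C v) (by norm_num : (2:ℤ) ≠ 0)
          linarith
        · rw [if_neg hxv]
          by_cases hxu : x = u
          · rw [if_pos hxu]
            have h0 := hbal0 x hxv
            rw [hbalCC₂ fh x, if_pos hxu] at h0
            have hgeq : g = C v / 2 := by rw [hgdef, if_pos hcv]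
            rw [hgeq] at h0
            rw [hkz]
            linarith
          · rw [if_neg hxu]
            have h0 := hbal0 x hxv
            rw [hbalCC₂ fh x, if_neg hxu] at h0
            linarith
    · set m : ℕ := (-(C v)).toNat with hm
      have hmz : (m:ℤ) = -(C v) := Int.toNat_of_nonneg (by linarith [not_le.mp hcv])
      set F : V → V → ℕ := fun a b => fh a b + if a = u ∧ b = v then m else 0 with hF
      have hbF : ∀ x, bal C F x = bal C fh x
          + (if x = u then -(2*(m:ℤ)) else 0) + (if x = v then (m:ℤ) else 0) :=
        fun x => bal_addMulti C fh huv m x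
      apply order_flow hT Set.univ (∑ w, ∑ z, F w z) C F rfl
      · intro w z h
        refine ⟨Set.mem_univ w, Set.mem_univ z, ?_⟩
        by_cases hc : w = u ∧ z = v
        · rw [hc.1, hc.2]
          exact hadj.symm
        · apply hadjf
          intro h0
          apply h
          simp only [hF]
          rw [h0, if_neg hc]
      · intro a b
        by_cases ha : a = v
        · left
          simp only [hF]
          rw [ha, hnov1 b, if_neg (fun h : v = u ∧ b = v => huv h.1.symm)]
        · by_cases hb : b = v
          · right
            simp only [hF]
            rw [hb, hnov1 a, if_neg (fun h : v = u ∧ a = v => huv h.1.symm)]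
          · rcases hone a b with h | h
            · left
              simp only [hF]
              rw [h, if_neg (fun hq : a = u ∧ b = v => hb hq.2)]
            · right
              simp only [hF]
              rw [h, if_neg (fun hq : b = u ∧ a = v => ha hq.2)]
      · intro x _
        rw [hbF x]
        by_cases hxv : x = v
        · rw [if_pos hxv, if_neg (fun h : x = u => huv (h.symm.trans hxv))]
          have h1 : bal C fh x = C v := by
            unfold bal
            rw [hxv, hflowv1, hflowv2]
            ring
          rw [h1, hmz]
          linarith
        · rw [if_neg hxv]
          by_cases hxu : x = u
          · rw [if_pos hxu]
            have h0 := hbal0 x hxv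
            rw [hbalCC₂ fh x, if_pos hxu] at h0
            have hgeq : g = 2 * C v := by rw [hgdef, if_neg hcv]
            rw [hgeq] at h0
            rw [hmz]
            linarith
          · rw [if_neg hxu]
            have h0 := hbal0 x hxv
            rw [hbalCC₂ fh x, if_neg hxu] at h0
            linarith

end AuxMachinery

/-- Deleting a leaf `v` (with neighbor `u`) of a tree: `C = D - ω` is `0`-solvable in `T`
iff the contracted generalized distribution `C'` is `0`-solvable in `T \ v`. -/
theorem zero_solvable_delete_leaf (T : SimpleGraph V) [Fintype V] [DecidableRel T.Adj]
    (hT : T.IsTree) (D ω : V → ℕ) (v u : V) (hleaf : T.degree v = 1) (hadj : T.Adj v u) :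
    ZSolvableOn T Set.univ (fun x => (D x : ℤ) - (ω x : ℤ)) ↔
      ZSolvableOn T {x | x ≠ v}
        (fun x =>
          if x = u then
            ((D u : ℤ) - ω u) +
              (if 0 ≤ (D v : ℤ) - ω v then ((D v : ℤ) - ω v) / 2
               else 2 * ((D v : ℤ) - ω v))
          else (D x : ℤ) - ω x) := by
  classical
  have hvu : ∀ z, T.Adj v z → z = u := by
    intro z hz
    have h1 : z ∈ T.neighborFinset v := (SimpleGraph.mem_neighborFinset _ _ _).mpr hz
    have h2 : u ∈ T.neighborFinset v := (SimpleGraph.mem_neighborFinset _ _ _).mpr hadj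
    have hcard : (T.neighborFinset v).card = 1 := by
      rw [SimpleGraph.card_neighborFinset_eq_degree]
      exact hleaf
    obtain ⟨a, ha⟩ := Finset.card_eq_one.mp hcard
    rw [ha, Finset.mem_singleton] at h1 h2
    rw [h1, h2]
  exact main_aux T hT.2 (fun x => (D x : ℤ) - (ω x : ℤ)) v u hvu hadj
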